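/- Any sum Σ_{j=1}^{N} c_j H_{n+j}(z) with N = 2m and complex coefficients c_j can be written as q_{m,1}(z) H_{n+m+1}(z) + q_{m,2}(z) H_{n+m}(z) with polynomials q_{m,1}, q_{m,2} of degree ≤ m-1; moreover, as the c_j range over all of ℂ^N, the pair (q_{m,1}, q_{m,2}) ranges over all pairs of polynomials of degree ≤ m-1. -/

import Mathlib

open Filter Set
open Polynomial Finset Polynomial.Chebyshev

lemma myU_deg_coeff (i : ℕ) : (U ℂ (i:ℤ)).natDegree ≤ i ∧ (U ℂ (i:ℤ)).coeff i = 2 ^ i := by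
  induction i using Nat.twoStepInduction with
  | zero => simp [U_zero]
  | one =>
    rw [Nat.cast_one, U_one]
    constructor
    · compute_degree
    · simp [coeff_X]
  | more k ih1 ih2 =>
    have e : ((k+2:ℕ):ℤ) = (k:ℤ) + 2 := by push_cast; ring
    have e1 : ((k:ℤ)+1) = ((k+1:ℕ):ℤ) := by push_cast; ring
    rw [e, U_add_two, e1]
    constructor
    · refine le_trans (natDegree_sub_le _ _) (max_le ?_ (le_trans ih1.1 (by omega)))
      refine le_trans natDegree_mul_le ?_
      have h2X : (2 * X : ℂ[X]).natDegree ≤ 1 := by compute_degree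
      have := ih2.1
      omega
    · rw [coeff_sub]
      have h1 : (2 * X * U ℂ ((k+1:ℕ):ℤ)).coeff (k+2) = 2 * (U ℂ ((k+1:ℕ):ℤ)).coeff (k+1) := by
        rw [mul_assoc, coeff_ofNat_mul, coeff_X_mul]
      rw [h1, ih2.2, coeff_eq_zero_of_natDegree_lt (lt_of_le_of_lt ih1.1 (by omega))]
      ring

lemma myU_deg_le (i : ℕ) : (U ℂ (i:ℤ)).natDegree ≤ i := (myU_deg_coeff i).1

lemma myU_sub_deg_le (i : ℕ) : (U ℂ ((i:ℤ)-1)).natDegree ≤ i - 1 := by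
  cases i with
  | zero => simp [U_neg_one]
  | succ j =>
    rw [show ((j+1:ℕ):ℤ)-1 = (j:ℤ) by push_cast; ring]
    simpa using myU_deg_le j

lemma myU_coeff_zero {i j : ℕ} (h : i < j) : (U ℂ (i:ℤ)).coeff j = 0 :=
  coeff_eq_zero_of_natDegree_lt (lt_of_le_of_lt (myU_deg_le i) h)

lemma myU_sub_coeff_zero {i j : ℕ} (h : i ≤ j) : (U ℂ ((i:ℤ)-1)).coeff j = 0 := by
  cases i with
  | zero => simp [U_neg_one]
  | succ k =>
    rw [show ((k+1:ℕ):ℤ)-1 = (k:ℤ) by push_cast; ring]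
    exact myU_coeff_zero (by omega)

lemma mydecomp : ∀ (k : ℕ) (p q : Polynomial ℂ), p.degree < (k:ℕ) → q.degree < (k:ℕ) →
    ∃ f g : ℕ → ℂ,
      p = ∑ i ∈ range k, (C (f i) * U ℂ (i:ℤ) - C (g i) * U ℂ ((i:ℤ)-1)) ∧
      q = ∑ i ∈ range k, (C (g i) * U ℂ (i:ℤ) - C (f i) * U ℂ ((i:ℤ)-1)) := by
  intro k
  induction k with
  | zero =>
    intro p q hp hq
    have hp0 : p = 0 := by
      by_contra hne
      rw [degree_eq_natDegree hne] at hp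
      norm_cast at hp
    have hq0 : q = 0 := by
      by_contra hne
      rw [degree_eq_natDegree hne] at hq
      norm_cast at hq
    exact ⟨0, 0, by simp [hp0], by simp [hq0]⟩
  | succ k ih =>
    intro p q hp hq
    set α := p.coeff k / 2^k with hα
    set β := q.coeff k / 2^k with hβ
    set p' := p - C α * U ℂ (k:ℤ) + C β * U ℂ ((k:ℤ)-1) with hp'
    set q' := q - C β * U ℂ (k:ℤ) + C α * U ℂ ((k:ℤ)-1) with hq'
    have key : ∀ (r : Polynomial ℂ) (a b : ℂ), r.degree < ((k+1:ℕ):WithBot ℕ) → a = r.coeff k / 2^k →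
        (r - C a * U ℂ (k:ℤ) + C b * U ℂ ((k:ℤ)-1)).degree < (k:ℕ) := by
      intro r a b hr ha
      rw [degree_lt_iff_coeff_zero]
      intro j hj
      rw [coeff_add, coeff_sub, coeff_C_mul, coeff_C_mul]
      rcases eq_or_lt_of_le hj with hjk | hjk
      · subst hjk
        rw [myU_sub_coeff_zero le_rfl, (myU_deg_coeff k).2, ha]
        field_simp
        ring
      · rw [myU_coeff_zero hjk, myU_sub_coeff_zero (le_of_lt hjk),
          coeff_eq_zero_of_degree_lt (lt_of_lt_of_le hr (by exact_mod_cast hjk))]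
        ring
    obtain ⟨f', g', hf', hg'⟩ := ih p' q' (key p α β hp hα) (key q β α hq hβ)
    refine ⟨fun i => if i = k then α else f' i, fun i => if i = k then β else g' i, ?_, ?_⟩
    · rw [Finset.sum_range_succ]
      simp only []
      rw [if_pos trivial, if_pos trivial,
        Finset.sum_congr rfl (fun i hi => by
          rw [if_neg (by simp at hi; omega), if_neg (by simp at hi; omega)]),
        ← hf', hp']
      ring
    · rw [Finset.sum_range_succ]
      simp only []
      rw [if_pos trivial, if_pos trivial,
        Finset.sum_congr rfl (fun i hi => by
          rw [if_neg (by simp at hi; omega), if_neg (by simp at hi; omega)]),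
        ← hg', hq']
      ring

/-- Relation (30): any sum `Σ_{j=1}^{N} c_j H_{n+j}` with `N = 2m`, where the second kind
functions `H_k` satisfy the recurrence `H_{k+2} = 2z H_{k+1} - H_k` (with
`H_{-1} ≡ 1`, `H_0(z) = (z²-1)^{-1/2}`), can be written as
`q_{m,1}(z) H_{n+m+1}(z) + q_{m,2}(z) H_{n+m}(z)` with `deg q_{m,i} ≤ m-1`; moreover, as
the `c_j` range over `ℂ^N`, the pairs `(q_{m,1}, q_{m,2})` range over all pairs of
polynomials of degree `≤ m-1`. -/
theorem stmt17 (segE : Set ℂ) (hsegE : segE = Complex.ofReal '' Set.Icc (-1 : ℝ) 1)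
    (s : ℂ → ℂ) (hs : ∀ z ∉ segE, (s z) ^ 2 = z ^ 2 - 1)
    (H : ℕ → ℂ → ℂ)
    (hH0 : ∀ z ∉ segE, H 0 z = (s z)⁻¹)
    (hHrec : ∀ k : ℕ, ∀ z ∉ segE, H (k + 2) z = 2 * z * H (k + 1) z - H k z)
    (n m : ℕ) (hm : 1 ≤ m) :
    (∀ c : Fin (2 * m) → ℂ, ∃ q₁ q₂ : Polynomial ℂ,
      q₁.natDegree ≤ m - 1 ∧ q₂.natDegree ≤ m - 1 ∧
      ∀ z ∉ segE, ∑ j : Fin (2 * m), c j * H (n + (j : ℕ) + 1) z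
        = q₁.eval z * H (n + m + 1) z + q₂.eval z * H (n + m) z) ∧
    (∀ q₁ q₂ : Polynomial ℂ, q₁.natDegree ≤ m - 1 → q₂.natDegree ≤ m - 1 →
      ∃ c : Fin (2 * m) → ℂ,
      ∀ z ∉ segE, ∑ j : Fin (2 * m), c j * H (n + (j : ℕ) + 1) z
        = q₁.eval z * H (n + m + 1) z + q₂.eval z * H (n + m) z) := by
  -- forward expansion
  have L1 : ∀ (a k : ℕ), ∀ z ∉ segE,
      (H (a + k + 1) z = (U ℂ (k:ℤ)).eval z * H (a+1) z - (U ℂ ((k:ℤ)-1)).eval z * H a z) ∧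
      (H (a + k + 2) z = (U ℂ ((k:ℤ)+1)).eval z * H (a+1) z - (U ℂ (k:ℤ)).eval z * H a z) := by
    intro a k
    induction k with
    | zero =>
      intro z hz
      constructor
      · norm_num [U_zero, U_neg_one]
      · have hr := hHrec a z hz
        norm_num [U_zero, U_one]
        rw [hr]
    | succ k ih =>
      intro z hz
      obtain ⟨h1, h2⟩ := ih z hz
      have e1 : ((k+1:ℕ):ℤ) = (k:ℤ)+1 := by push_cast; ring
      constructor
      · rw [show a + (k+1) + 1 = a + k + 2 by omega, e1,
          show (k:ℤ)+1-1 = (k:ℤ) by ring]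
        exact h2
      · have hr := hHrec (a+k+1) z hz
        have hU : (U ℂ ((k:ℤ)+1+1)).eval z
            = 2 * z * (U ℂ ((k:ℤ)+1)).eval z - (U ℂ (k:ℤ)).eval z := by
          rw [show (k:ℤ)+1+1 = (k:ℤ)+2 by ring, U_add_two]
          simp [eval_mul, eval_sub]
        have hU0 : (U ℂ ((k:ℤ)+1)).eval z
            = 2 * z * (U ℂ (k:ℤ)).eval z - (U ℂ ((k:ℤ)-1)).eval z := by
          rw [U_add_one]
          simp [eval_mul, eval_sub]
        rw [show a + (k+1) + 2 = a + k + 1 + 2 by omega, e1, hU, hr,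
          show a + k + 1 + 1 = a + k + 2 by omega, h1, h2, hU0]
        ring
  -- backward expansion
  have L2 : ∀ (a k : ℕ), ∀ z ∉ segE,
      H a z = (U ℂ (k:ℤ)).eval z * H (a+k) z - (U ℂ ((k:ℤ)-1)).eval z * H (a+k+1) z := by
    intro a k
    induction k with
    | zero =>
      intro z hz
      norm_num [U_zero, U_neg_one]
    | succ k ih =>
      intro z hz
      have hr := hHrec (a+k) z hz
      have e1 : ((k+1:ℕ):ℤ) = (k:ℤ)+1 := by push_cast; ring
      have hU : (U ℂ ((k:ℤ)+1)).eval z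
          = 2 * z * (U ℂ (k:ℤ)).eval z - (U ℂ ((k:ℤ)-1)).eval z := by
        rw [U_add_one]
        simp [eval_mul, eval_sub]
      rw [ih z hz, e1, show (k:ℤ)+1-1 = (k:ℤ) by ring, hU,
        show a + (k+1) = a + k + 1 by omega, show a + k + 1 + 1 = a + k + 2 by omega, hr]
      have hHk : H (a+k) z = 2 * z * H (a+k+1) z - H (a+k+2) z := by rw [hr]; ring
      rw [hHk, hr]
      ring
  -- central computation
  have central : ∀ f g : ℕ → ℂ, ∀ z ∉ segE,
      (∑ j ∈ Finset.range (2*m), (if j < m then g (m-1-j) else f (j-m)) * H (n+j+1) z)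
      = (∑ i ∈ Finset.range m, (C (f i) * U ℂ (i:ℤ) - C (g i) * U ℂ ((i:ℤ)-1))).eval z * H (n+m+1) z
      + (∑ i ∈ Finset.range m, (C (g i) * U ℂ (i:ℤ) - C (f i) * U ℂ ((i:ℤ)-1))).eval z * H (n+m) z := by
    intro f g z hz
    rw [two_mul, Finset.sum_range_add]
    have hB : (∑ i ∈ Finset.range m, (if m+i < m then g (m-1-(m+i)) else f (m+i-m)) * H (n+(m+i)+1) z)
        = ∑ i ∈ Finset.range m, f i * ((U ℂ (i:ℤ)).eval z * H (n+m+1) z - (U ℂ ((i:ℤ)-1)).eval z * H (n+m) z) := by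
      refine Finset.sum_congr rfl fun i hi => ?_
      rw [if_neg (by omega), show m+i-m = i by omega,
        show n+(m+i)+1 = (n+m)+i+1 by omega, (L1 (n+m) i z hz).1]
    have hA : (∑ j ∈ Finset.range m, (if j < m then g (m-1-j) else f (j-m)) * H (n+j+1) z)
        = ∑ i ∈ Finset.range m, g i * ((U ℂ (i:ℤ)).eval z * H (n+m) z - (U ℂ ((i:ℤ)-1)).eval z * H (n+m+1) z) := by
      rw [← Finset.sum_range_reflect]
      refine Finset.sum_congr rfl fun i hi => ?_
      simp only [Finset.mem_range] at hi
      have hL := L2 (n+(m-1-i)+1) i z hz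
      rw [show n+(m-1-i)+1+i = n+m by omega, show n+m+1 = n+m+1 by rfl] at hL
      rw [if_pos (by omega), show m-1-(m-1-i) = i by omega, hL]
    rw [hA, hB, ← Finset.sum_add_distrib, Polynomial.eval_finset_sum, Polynomial.eval_finset_sum,
      Finset.sum_mul, Finset.sum_mul, ← Finset.sum_add_distrib]
    refine Finset.sum_congr rfl fun i _ => ?_
    simp only [eval_sub, eval_mul, eval_C]
    ring
  -- converting Fin sums to range sums
  have conv : ∀ (cc : ℕ → ℂ) (c : Fin (2*m) → ℂ), (∀ j : Fin (2*m), cc j = c j) → ∀ z : ℂ,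
      (∑ j : Fin (2*m), c j * H (n + (j:ℕ) + 1) z) = ∑ j ∈ Finset.range (2*m), cc j * H (n+j+1) z := by
    intro cc c h z
    rw [← Fin.sum_univ_eq_sum_range (fun j => cc j * H (n+j+1) z) (2*m)]
    exact Finset.sum_congr rfl fun j _ => by rw [h j]
  have degbound : ∀ f g : ℕ → ℂ,
      (∑ i ∈ Finset.range m, (C (f i) * U ℂ (i:ℤ) - C (g i) * U ℂ ((i:ℤ)-1))).natDegree ≤ m - 1 := by
    intro f g
    refine Polynomial.natDegree_sum_le_of_forall_le _ _ fun i hi => ?_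
    simp only [Finset.mem_range] at hi
    refine le_trans (natDegree_sub_le _ _) (max_le ?_ ?_)
    · exact le_trans (natDegree_C_mul_le _ _) (le_trans (myU_deg_le i) (by omega))
    · exact le_trans (natDegree_C_mul_le _ _) (le_trans (myU_sub_deg_le i) (by omega))
  constructor
  · intro c
    set cc : ℕ → ℂ := fun j => if h : j < 2*m then c ⟨j, h⟩ else 0 with hcc
    set f : ℕ → ℂ := fun i => cc (m+i) with hf
    set g : ℕ → ℂ := fun i => cc (m-1-i) with hg
    refine ⟨∑ i ∈ Finset.range m, (C (f i) * U ℂ (i:ℤ) - C (g i) * U ℂ ((i:ℤ)-1)),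
           ∑ i ∈ Finset.range m, (C (g i) * U ℂ (i:ℤ) - C (f i) * U ℂ ((i:ℤ)-1)),
           degbound f g, degbound g f, ?_⟩
    intro z hz
    rw [conv cc c (fun j => by simp only [hcc]; rw [dif_pos j.isLt]) z]
    have hterms : ∀ j ∈ Finset.range (2*m),
        cc j * H (n+j+1) z = (if j < m then g (m-1-j) else f (j-m)) * H (n+j+1) z := by
      intro j hj
      simp only [Finset.mem_range] at hj
      congr 1
      by_cases hjm : j < m
      · rw [if_pos hjm]
        simp only [hg]
        rw [show m-1-(m-1-j) = j by omega]
      · rw [if_neg hjm]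
        simp only [hf]
        rw [show m+(j-m) = j by omega]
    rw [Finset.sum_congr rfl hterms, central f g z hz]
  · intro q₁ q₂ h1 h2
    have hd : ∀ r : Polynomial ℂ, r.natDegree ≤ m - 1 → r.degree < ((m:ℕ) : WithBot ℕ) := by
      intro r hr
      calc r.degree ≤ (r.natDegree : WithBot ℕ) := degree_le_natDegree
        _ < ((m:ℕ) : WithBot ℕ) := by exact_mod_cast (by omega : r.natDegree < m)
    obtain ⟨f, g, hfq, hgq⟩ := mydecomp m q₁ q₂ (hd q₁ h1) (hd q₂ h2)
    refine ⟨fun j => if (j:ℕ) < m then g (m-1-(j:ℕ)) else f ((j:ℕ)-m), fun z hz => ?_⟩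
    rw [conv (fun j => if j < m then g (m-1-j) else f (j-m)) _ (fun j => rfl) z,
      central f g z hz, ← hfq, ← hgq]
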